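/- For all a,b>0, N≥2, 1≤n≤N−1, and all τ_1,…,τ_{n−1},τ_{n+2},…,τ_N∈{0,1}, one has f_N(τ_1,…,τ_{n−1},1,0,τ_{n+2},…,τ_N)=f_{N−1}(τ_1,…,τ_{n−1},1,τ_{n+2},…,τ_N)+f_{N−1}(τ_1,…,τ_{n−1},0,τ_{n+2},…,τ_N). -/
import Mathlib


open Finset

/-- Partial sum `s^τ(k) = τ_1 + ⋯ + τ_k` of a word `τ ∈ {0,1}^N`. -/
def pSum {N : ℕ} (τ : Fin N → Fin 2) (k : ℕ) : ℤ :=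
  ∑ i : Fin N, if (i : ℕ) < k then ((τ i : ℕ) : ℤ) else 0

/-- `min_{0 ≤ j ≤ N} (s^τ(j) − s^ξ(j))`. -/
def minDiff {N : ℕ} (τ ξ : Fin N → Fin 2) : ℤ :=
  (Finset.range (N + 1)).inf' (by simp) fun j => pSum τ j - pSum ξ j

/-- `f_N(τ) = Σ_ξ b^(s^τ(N)−s^ξ(N)) (ab)^(−min_{0≤j≤N}(s^τ(j)−s^ξ(j)))`. -/
noncomputable def fTL (a b : ℝ) {N : ℕ} (τ : Fin N → Fin 2) : ℝ :=
  ∑ ξ : Fin N → Fin 2, b ^ (pSum τ N - pSum ξ N) * (a * b) ^ (-(minDiff τ ξ))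

lemma pSum_zero {N} (u : Fin N → Fin 2) : pSum u 0 = 0 := by simp [pSum]

lemma pSum_ge {N} (u : Fin N → Fin 2) {j : ℕ} (h : N ≤ j) : pSum u j = pSum u N := by
  unfold pSum
  refine Finset.sum_congr rfl fun i _ => ?_
  have := i.isLt
  rw [if_pos (by omega), if_pos i.isLt]

lemma pSum_append {p q} (u : Fin p → Fin 2) (v : Fin q → Fin 2) (j : ℕ) :
    pSum (Fin.append u v) j = pSum u j + pSum v (j - p) := by
  unfold pSum
  rw [Fin.sum_univ_add]
  congr 1
  · exact Finset.sum_congr rfl fun i _ => by simp [Fin.append_left]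
  · refine Finset.sum_congr rfl fun i _ => ?_
    rw [Fin.append_right]
    simp only [Fin.coe_natAdd]
    by_cases h : p + (i : ℕ) < j
    · rw [if_pos h, if_pos (by omega)]
    · rw [if_neg h, if_neg (by omega)]

lemma minDiff_append {p q r : ℕ} (u : Fin p → Fin 2) (μ : Fin q → Fin 2) (w : Fin r → Fin 2)
    (u' : Fin p → Fin 2) (ν : Fin q → Fin 2) (w' : Fin r → Fin 2) :
    minDiff (Fin.append (Fin.append u μ) w) (Fin.append (Fin.append u' ν) w')
      = min (minDiff u u')
          (min ((pSum u p - pSum u' p)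
                  + (Finset.range (q + 1)).inf' (by simp) (fun t => pSum μ t - pSum ν t))
               ((pSum u p - pSum u' p) + (pSum μ q - pSum ν q) + minDiff w w')) := by
  have hD : ∀ j : ℕ,
      pSum (Fin.append (Fin.append u μ) w) j - pSum (Fin.append (Fin.append u' ν) w') j
        = (pSum u j - pSum u' j) + (pSum μ (j - p) - pSum ν (j - p))
            + (pSum w (j - (p + q)) - pSum w' (j - (p + q))) := by
    intro j
    rw [pSum_append, pSum_append, pSum_append, pSum_append]
    ring
  unfold minDiff
  apply le_antisymm
  · refine le_min ?_ (le_min ?_ ?_)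
    · obtain ⟨j0, hj0, hval⟩ := Finset.exists_mem_eq_inf' (s := range (p+1)) (by simp)
        (fun j => pSum u j - pSum u' j)
      rw [hval]
      have hj0p : j0 ≤ p := by simp only [mem_range] at hj0; omega
      refine le_trans (Finset.inf'_le _ (by simp [mem_range]; omega : j0 ∈ range ((p+q)+r+1))) ?_
      rw [hD j0]
      have h1 : j0 - p = 0 := by omega
      have h2 : j0 - (p+q) = 0 := by omega
      rw [h1, h2, pSum_zero, pSum_zero, pSum_zero, pSum_zero]
      omega
    · obtain ⟨t0, ht0, hval⟩ := Finset.exists_mem_eq_inf' (s := range (q+1)) (by simp)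
        (fun t => pSum μ t - pSum ν t)
      rw [hval]
      have ht0q : t0 ≤ q := by simp only [mem_range] at ht0; omega
      refine le_trans (Finset.inf'_le _ (by simp [mem_range]; omega : p + t0 ∈ range ((p+q)+r+1))) ?_
      rw [hD (p + t0)]
      have h1 : p + t0 - p = t0 := by omega
      have h2 : p + t0 - (p+q) = 0 := by omega
      rw [h1, h2, pSum_zero, pSum_zero, pSum_ge u (by omega : p ≤ p + t0),
        pSum_ge u' (by omega : p ≤ p + t0)]
      omega
    · obtain ⟨t0, ht0, hval⟩ := Finset.exists_mem_eq_inf' (s := range (r+1)) (by simp)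
        (fun t => pSum w t - pSum w' t)
      rw [hval]
      have ht0r : t0 ≤ r := by simp only [mem_range] at ht0; omega
      refine le_trans (Finset.inf'_le _ (by simp [mem_range]; omega : p + q + t0 ∈ range ((p+q)+r+1))) ?_
      rw [hD (p + q + t0)]
      have h1 : p + q + t0 - p = q + t0 := by omega
      have h2 : p + q + t0 - (p+q) = t0 := by omega
      rw [h1, h2, pSum_ge u (by omega : p ≤ p + q + t0), pSum_ge u' (by omega : p ≤ p + q + t0),
        pSum_ge μ (by omega : q ≤ q + t0), pSum_ge ν (by omega : q ≤ q + t0)]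
  · refine Finset.le_inf' _ _ fun j hj => ?_
    simp only [mem_range] at hj
    rw [hD j]
    rcases le_or_gt j p with h1 | h1
    · have e1 : j - p = 0 := by omega
      have e2 : j - (p+q) = 0 := by omega
      rw [e1, e2, pSum_zero, pSum_zero, pSum_zero, pSum_zero]
      have hle : (Finset.range (p + 1)).inf' (by simp) (fun j => pSum u j - pSum u' j)
          ≤ pSum u j - pSum u' j :=
        Finset.inf'_le _ (by simp [mem_range]; omega)
      refine le_trans (min_le_left _ _) ?_
      omega
    · rcases le_or_gt j (p + q) with h2 | h2
      · have e2 : j - (p+q) = 0 := by omega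
        rw [e2, pSum_zero, pSum_zero, pSum_ge u (j := j) (by omega), pSum_ge u' (j := j) (by omega)]
        have : (Finset.range (q + 1)).inf' (by simp) (fun t => pSum μ t - pSum ν t)
            ≤ pSum μ (j - p) - pSum ν (j - p) :=
          Finset.inf'_le _ (by simp [mem_range]; omega)
        refine le_trans (min_le_right _ _) (le_trans (min_le_left _ _) ?_)
        omega
      · rw [pSum_ge u (j := j) (by omega), pSum_ge u' (j := j) (by omega),
          pSum_ge μ (by omega : q ≤ j - p), pSum_ge ν (by omega : q ≤ j - p)]
        have : (Finset.range (r + 1)).inf' (by simp) (fun t => pSum w t - pSum w' t)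
            ≤ pSum w (j - (p+q)) - pSum w' (j - (p+q)) :=
          Finset.inf'_le _ (by simp [mem_range]; omega)
        refine le_trans (min_le_right _ _) (le_trans (min_le_right _ _) ?_)
        omega

lemma sum_triple (p q r : ℕ) (g : (Fin ((p+q)+r) → Fin 2) → ℝ) :
    ∑ ξ, g ξ = ∑ β : Fin p → Fin 2, ∑ ν : Fin q → Fin 2, ∑ δ : Fin r → Fin 2,
      g (Fin.append (Fin.append β ν) δ) := by
  rw [← Equiv.sum_comp (((Fin.appendEquiv p q).prodCongr
        (Equiv.refl (Fin r → Fin 2))).trans (Fin.appendEquiv (p+q) r)) g]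
  rw [Fintype.sum_prod_type]
  rw [Fintype.sum_prod_type]
  rfl

lemma sum_two (h : (Fin 2 → Fin 2) → ℝ) :
    ∑ ν : Fin 2 → Fin 2, h ν = h ![0,0] + h ![0,1] + h ![1,0] + h ![1,1] := by
  rw [← Equiv.sum_comp (finTwoArrowEquiv (Fin 2)).symm h]
  simp [Fintype.sum_prod_type, Fin.sum_univ_two, finTwoArrowEquiv]
  ring

lemma sum_one (h : (Fin 1 → Fin 2) → ℝ) :
    ∑ ν : Fin 1 → Fin 2, h ν = h ![0] + h ![1] := by
  rw [← Equiv.sum_comp (Equiv.funUnique (Fin 1) (Fin 2)).symm h]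
  rw [Fin.sum_univ_two]
  congr 1 <;> · congr 1; funext i; fin_cases i <;> rfl

lemma inf'_range3 (f : ℕ → ℤ) : (Finset.range (2+1)).inf' (by simp) f = min (f 0) (min (f 1) (f 2)) := by
  apply le_antisymm
  · exact le_min (Finset.inf'_le _ (by simp)) (le_min (Finset.inf'_le _ (by simp))
      (Finset.inf'_le _ (by simp)))
  · refine Finset.le_inf' _ _ fun j hj => ?_
    simp only [mem_range] at hj
    interval_cases j <;> omega

lemma inf'_range2 (f : ℕ → ℤ) : (Finset.range (1+1)).inf' (by simp) f = min (f 0) (f 1) := by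
  apply le_antisymm
  · exact le_min (Finset.inf'_le _ (by simp)) (Finset.inf'_le _ (by simp))
  · refine Finset.le_inf' _ _ fun j hj => ?_
    simp only [mem_range] at hj
    interval_cases j <;> omega

lemma pSum_two_val (x y : Fin 2) (t : ℕ) :
    pSum ![x, y] t = (if 0 < t then ((x : ℕ) : ℤ) else 0) + (if 1 < t then ((y : ℕ) : ℤ) else 0) := by
  simp only [pSum, Fin.sum_univ_two]
  norm_num

lemma pSum_one_val (x : Fin 2) (t : ℕ) :
    pSum ![x] t = if 0 < t then ((x : ℕ) : ℤ) else 0 := by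
  simp only [pSum, Fin.sum_univ_one]
  norm_num

lemma pSum_total {p q r : ℕ} (u : Fin p → Fin 2) (μ : Fin q → Fin 2) (w : Fin r → Fin 2) :
    pSum (Fin.append (Fin.append u μ) w) ((p+q)+r) = pSum u p + pSum μ q + pSum w r := by
  rw [pSum_append, pSum_append]
  rw [pSum_ge u (by omega), pSum_ge μ (j := (p+q)+r - p) (by omega),
    show (p+q)+r - (p+q) = r by omega]

theorem stmt3 (a b : ℝ) (ha : 0 < a) (hb : 0 < b) (k m : ℕ)
    (α : Fin k → Fin 2) (γ : Fin m → Fin 2) :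
    fTL a b (Fin.append (Fin.append α ![1, 0]) γ)
      = fTL a b (Fin.append (Fin.append α ![1]) γ)
        + fTL a b (Fin.append (Fin.append α ![0]) γ) := by
  simp only [fTL]
  rw [sum_triple k 2 m, sum_triple k 1 m, sum_triple k 1 m, ← Finset.sum_add_distrib]
  refine Finset.sum_congr rfl fun β _ => ?_
  rw [sum_two, sum_one, sum_one]
  simp only [← Finset.sum_add_distrib]
  refine Finset.sum_congr rfl fun δ _ => ?_
  simp only [minDiff_append, pSum_total, inf'_range3, inf'_range2, pSum_two_val, pSum_one_val]
  norm_num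
  have e1 : pSum α k + 1 + pSum γ m - (pSum β k + 1 + pSum δ m)
      = pSum α k + pSum γ m - (pSum β k + pSum δ m) := by ring
  have e2 : pSum α k + 1 + pSum γ m - (pSum β k + 2 + pSum δ m)
      = pSum α k + pSum γ m - (pSum β k + 1 + pSum δ m) := by ring
  rw [e1, e2]
  ring
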